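/- arXiv:2509.08169 — 3 statements merged into one kernel-verified Lean document; each statement's English description precedes it below -/
import Mathlib

section
/- Let E be a finite-dimensional real normed vector space, let N : E → E, and let y : [t, t+τ] → E be twice continuously differentiable with y'(s) = N(y(s)) for all s ∈ [t, t+τ] and ‖y''(s)‖ ≤ M for all s ∈ [t, t+τ], where τ > 0. Suppose u ∈ E satisfies ‖u − N(y(t))‖ ≤ M_s·τ and ỹ ∈ E satisfies ‖ỹ − (y(t) + τ·u)‖ ≤ M_r·τ². Then ‖y(t+τ) − ỹ‖ ≤ (M/2 + M_s + M_r)·τ². (This is the order-one local truncation error of the rank-adaptive forward Euler step Y_{j+1} = 𝔗_{r_j}(Y_j + τ 𝔗_{s_j}(N(Y_j))) under the truncation-rank selection bounds.) -/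
/-- Local truncation error (order one) of the rank-adaptive forward Euler step
`Y_{j+1} = 𝔗_{r_j}(Y_j + τ 𝔗_{s_j}(N(Y_j)))` under the truncation-rank selection bounds. -/
theorem rank_adaptive_euler_local_truncation_error
    {E : Type*} [NormedAddCommGroup E] [NormedSpace ℝ E] [FiniteDimensional ℝ E]
    (N : E → E) (y y' y'' : ℝ → E) (t τ M Ms Mr : ℝ) (hτ : 0 < τ)
    (hy' : ∀ s ∈ Set.Icc t (t + τ), HasDerivAt y (y' s) s)
    (hy'' : ∀ s ∈ Set.Icc t (t + τ), HasDerivAt y' (y'' s) s)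
    (hy''cont : ContinuousOn y'' (Set.Icc t (t + τ)))
    (hode : ∀ s ∈ Set.Icc t (t + τ), y' s = N (y s))
    (hM : ∀ s ∈ Set.Icc t (t + τ), ‖y'' s‖ ≤ M)
    (u ytil : E)
    (hu : ‖u - N (y t)‖ ≤ Ms * τ)
    (hytil : ‖ytil - (y t + τ • u)‖ ≤ Mr * τ ^ 2) :
    ‖y (t + τ) - ytil‖ ≤ (M / 2 + Ms + Mr) * τ ^ 2 := by
  have htmem : t ∈ Set.Icc t (t + τ) := ⟨le_refl t, by linarith⟩
  have hconv : Convex ℝ (Set.Icc t (t + τ)) := convex_Icc _ _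
  -- ‖y' s - y' t‖ ≤ M (s - t)
  have hLip : ∀ s ∈ Set.Icc t (t + τ), ‖y' s - y' t‖ ≤ M * (s - t) := by
    intro s hs
    have := hconv.norm_image_sub_le_of_norm_hasDerivWithin_le
      (f := y') (f' := y'') (C := M)
      (fun x hx => (hy'' x hx).hasDerivWithinAt) hM htmem hs
    calc ‖y' s - y' t‖ ≤ M * ‖s - t‖ := this
      _ = M * (s - t) := by rw [Real.norm_eq_abs, abs_of_nonneg (by linarith [hs.1])]
  -- g s = y s - y t - (s - t) • y' t,  ‖g (t+τ)‖ ≤ M τ²/2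
  set g : ℝ → E := fun s => y s - y t - (s - t) • y' t with hg
  have hg' : ∀ s ∈ Set.Icc t (t + τ), HasDerivWithinAt g (y' s - y' t) (Set.Ici s) s := by
    intro s hs
    have h1 : HasDerivAt (fun s : ℝ => (s - t) • y' t) (y' t) s := by
      simpa using ((hasDerivAt_id s).sub_const t).smul_const (y' t)
    exact (((hy' s hs).sub_const (y t)).sub h1).hasDerivWithinAt
  have hgc : ContinuousOn g (Set.Icc t (t + τ)) := by
    intro s hs
    exact (((hy' s hs).continuousAt.continuousWithinAt).sub continuousWithinAt_const).sub
      (((continuousWithinAt_id.sub continuousWithinAt_const).smul continuousWithinAt_const))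
  have key : ‖g (t + τ)‖ ≤ M / 2 * ((t + τ) - t) ^ 2 := by
    have := image_norm_le_of_norm_deriv_right_le_deriv_boundary'
      (f := g) (f' := fun s => y' s - y' t) (a := t) (b := t + τ)
      hgc (fun s hs => hg' s (Set.mem_Icc_of_Ico hs))
      (B := fun s => M / 2 * (s - t) ^ 2) (B' := fun s => M * (s - t))
      (by simp [hg]) (by fun_prop)
      (fun s _ => by
        have : HasDerivAt (fun s : ℝ => M / 2 * (s - t) ^ 2) (M * (s - t)) s := by
          have := (((hasDerivAt_id s).sub_const t).pow 2).const_mul (M / 2)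
          convert this using 1
          · rfl
          · rfl
          · simp
          simp; ring
        exact this.hasDerivWithinAt)
      (fun s hs => hLip s (Set.mem_Icc_of_Ico hs))
    exact this ⟨by linarith, le_refl _⟩
  have key' : ‖y (t + τ) - y t - τ • y' t‖ ≤ M / 2 * τ ^ 2 := by
    have : (t + τ) - t = τ := by ring
    simpa [hg, this] using key
  have hodeT : y' t = N (y t) := hode t htmem
  have decomp : y (t + τ) - ytil =
      (y (t + τ) - y t - τ • y' t) + τ • (y' t - u) + (y t + τ • u - ytil) := by
    module
  calc ‖y (t + τ) - ytil‖
      ≤ ‖y (t + τ) - y t - τ • y' t‖ + ‖τ • (y' t - u)‖ + ‖y t + τ • u - ytil‖ := by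
        rw [decomp]; exact norm_add₃_le
    _ ≤ M / 2 * τ ^ 2 + τ * (Ms * τ) + Mr * τ ^ 2 := by
        gcongr
        · rw [norm_smul, Real.norm_eq_abs, abs_of_pos hτ]
          gcongr
          rw [hodeT, ← norm_neg]
          simpa [neg_sub] using hu
        · rw [← norm_neg]; simpa [neg_sub] using hytil
    _ = (M / 2 + Ms + Mr) * τ ^ 2 := by ring
end

section
/- Let E be a finite-dimensional real normed vector space, N : E → E Lipschitz continuous with constant L > 0, and let y : [0, T] → E be twice continuously differentiable with y'(t) = N(y(t)) for all t ∈ [0, T] and ‖y''(t)‖ ≤ M on [0, T]. Fix a positive integer N̄, set τ = T/N̄, and let (Y_j)_{0 ≤ j ≤ N̄} be any sequence in E with Y₀ = y(0) such that for each j there exists u_j ∈ E with ‖u_j − N(Y_j)‖ ≤ M_s·τ and ‖Y_{j+1} − (Y_j + τ·u_j)‖ ≤ M_r·τ². Then for all 0 ≤ j ≤ N̄, ‖Y_j − y(jτ)‖ ≤ ((M/2 + M_s + M_r)/L)·(e^{L·jτ} − 1)·τ. In particular the rank-adaptive forward Euler scheme converges with global order one. -/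
set_option maxHeartbeats 1000000


/-- Global order-one convergence of the rank-adaptive forward Euler scheme
`Y_{j+1} = 𝔗_{r_j}(Y_j + τ 𝔗_{s_j}(N(Y_j)))`, where the truncated quantities are
abstracted as arbitrary elements `u_j` and `Y_{j+1}` satisfying the truncation bounds. -/
theorem rank_adaptive_euler_global_convergence
    {E : Type*} [NormedAddCommGroup E] [NormedSpace ℝ E] [FiniteDimensional ℝ E]
    (N : E → E) (L : ℝ) (hLpos : 0 < L)
    (hLip : ∀ a b : E, ‖N a - N b‖ ≤ L * ‖a - b‖)
    (y y' y'' : ℝ → E) (T M Ms Mr : ℝ) (hT : 0 < T)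
    (hy' : ∀ t ∈ Set.Icc (0 : ℝ) T, HasDerivAt y (y' t) t)
    (hy'' : ∀ t ∈ Set.Icc (0 : ℝ) T, HasDerivAt y' (y'' t) t)
    (hy''cont : ContinuousOn y'' (Set.Icc (0 : ℝ) T))
    (hode : ∀ t ∈ Set.Icc (0 : ℝ) T, y' t = N (y t))
    (hM : ∀ t ∈ Set.Icc (0 : ℝ) T, ‖y'' t‖ ≤ M)
    (Nbar : ℕ) (hNbar : 0 < Nbar) (τ : ℝ) (hτ : τ = T / (Nbar : ℝ))
    (Y : ℕ → E) (hY0 : Y 0 = y 0)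
    (hstep : ∀ j < Nbar, ∃ u : E,
      ‖u - N (Y j)‖ ≤ Ms * τ ∧ ‖Y (j + 1) - (Y j + τ • u)‖ ≤ Mr * τ ^ 2) :
    ∀ j ≤ Nbar,
      ‖Y j - y ((j : ℝ) * τ)‖ ≤
        ((M / 2 + Ms + Mr) / L) * (Real.exp (L * ((j : ℝ) * τ)) - 1) * τ := by
  have hNpos : (0 : ℝ) < (Nbar : ℝ) := by exact_mod_cast hNbar
  have hτpos : 0 < τ := by rw [hτ]; positivity
  have hNτ : (Nbar : ℝ) * τ = T := by rw [hτ]; field_simp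
  -- nonnegativity of constants
  have hMnn : 0 ≤ M := le_trans (norm_nonneg _) (hM 0 ⟨le_refl _, hT.le⟩)
  have hMsMr : 0 ≤ Ms ∧ 0 ≤ Mr := by
    obtain ⟨u, h1, h2⟩ := hstep 0 hNbar
    have a1 := le_trans (norm_nonneg _) h1
    have a2 := le_trans (norm_nonneg _) h2
    have hτ2 : 0 < τ ^ 2 := by positivity
    constructor <;> nlinarith
  set C : ℝ := M / 2 + Ms + Mr with hCdef
  have hCnn : 0 ≤ C := by have := hMsMr; unfold C; linarith [hMsMr.1, hMsMr.2]
  -- Taylor remainder bound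
  have taylor : ∀ a b : ℝ, a ∈ Set.Icc (0 : ℝ) T → b ∈ Set.Icc (0 : ℝ) T → a ≤ b →
      ‖y b - y a - (b - a) • y' a‖ ≤ M / 2 * (b - a) ^ 2 := by
    intro a b ha hb hab
    have hsub : Set.Icc a b ⊆ Set.Icc (0 : ℝ) T := Set.Icc_subset_Icc ha.1 hb.2
    set g : ℝ → E := fun t => y t - y a - (t - a) • y' a with hg
    have hgderiv : ∀ x ∈ Set.Icc a b, HasDerivAt g (y' x - y' a) x := by
      intro x hx
      have h1 : HasDerivAt (fun t : ℝ => (t - a) • y' a) ((1 : ℝ) • y' a) x :=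
        ((hasDerivAt_id x).sub_const a).smul_const (y' a)
      have h2 := ((hy' x (hsub hx)).sub_const (y a)).sub h1
      simp only [one_smul] at h2
      exact h2
    -- bound on y' variation via y''
    have hy'bound : ∀ x ∈ Set.Icc a b, ‖y' x - y' a‖ ≤ M * (x - a) := by
      intro x hx
      refine norm_image_sub_le_of_norm_deriv_le_segment' (f' := y'') ?_ ?_ x hx
      · intro t ht
        exact (hy'' t (hsub ht)).hasDerivWithinAt
      · intro t ht
        exact hM t (hsub (Set.mem_Icc.2 ⟨ht.1, ht.2.le⟩))
    have hgcont : ContinuousOn g (Set.Icc a b) := fun t ht =>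
      (hgderiv t ht).continuousAt.continuousWithinAt
    have hB : ∀ x : ℝ, HasDerivAt (fun t => M / 2 * (t - a) ^ 2) (M * (x - a)) x := by
      intro x
      have h1 : HasDerivAt (fun t : ℝ => (t - a) ^ 2) (2 * (x - a)) x := by
        have h := ((hasDerivAt_id x).sub_const a).pow 2
        simp at h
        exact h
      have := h1.const_mul (M / 2)
      rw [show M * (x - a) = M / 2 * (2 * (x - a)) by ring]
      exact this
    have key := image_norm_le_of_norm_deriv_right_le_deriv_boundary
      (f := g) (f' := fun x => y' x - y' a) (a := a) (b := b) hgcont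
      (fun x hx => (hgderiv x (Set.mem_Icc.2 ⟨hx.1, hx.2.le⟩)).hasDerivWithinAt)
      (B := fun t => M / 2 * (t - a) ^ 2) (B' := fun x => M * (x - a))
      (by simp [g]) hB
      (fun x hx => hy'bound x (Set.mem_Icc.2 ⟨hx.1, hx.2.le⟩))
    exact key (Set.mem_Icc.2 ⟨hab, le_refl b⟩)
  -- discrete induction
  have key : ∀ j, j ≤ Nbar →
      ‖Y j - y ((j : ℝ) * τ)‖ ≤ (C / L) * ((1 + L * τ) ^ j - 1) * τ := by
    intro j
    induction j with
    | zero => intro _; simp [hY0]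
    | succ j ih =>
      intro hj1
      have hjle : j ≤ Nbar := Nat.le_of_succ_le hj1
      have hjlt : j < Nbar := hj1
      have ihe := ih hjle
      obtain ⟨u, hu1, hu2⟩ := hstep j hjlt
      -- grid points in [0, T]
      have hjτmem : (j : ℝ) * τ ∈ Set.Icc (0 : ℝ) T := by
        constructor
        · positivity
        · rw [← hNτ]
          have : (j : ℝ) ≤ (Nbar : ℝ) := by exact_mod_cast hjle
          nlinarith
      have hj1τmem : ((j : ℝ) + 1) * τ ∈ Set.Icc (0 : ℝ) T := by
        constructor
        · positivity
        · rw [← hNτ]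
          have : (j : ℝ) + 1 ≤ (Nbar : ℝ) := by exact_mod_cast hj1
          nlinarith
      have hcast : ((j + 1 : ℕ) : ℝ) = (j : ℝ) + 1 := by push_cast; ring
      -- Taylor estimate on this step
      have htay := taylor ((j : ℝ) * τ) (((j : ℝ) + 1) * τ) hjτmem hj1τmem (by nlinarith)
      have hdiff : ((j : ℝ) + 1) * τ - (j : ℝ) * τ = τ := by ring
      rw [hdiff] at htay
      rw [hode _ hjτmem] at htay
      -- decomposition of the error
      have hdecomp : Y (j + 1) - y (((j : ℝ) + 1) * τ) =
          (Y (j + 1) - (Y j + τ • u)) + τ • (u - N (Y j)) +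
          τ • (N (Y j) - N (y ((j : ℝ) * τ))) + (Y j - y ((j : ℝ) * τ)) -
          (y (((j : ℝ) + 1) * τ) - y ((j : ℝ) * τ) - τ • N (y ((j : ℝ) * τ))) := by
        simp only [smul_sub]
        abel
      have hnorm : ‖Y (j + 1) - y (((j : ℝ) + 1) * τ)‖ ≤
          Mr * τ ^ 2 + τ * (Ms * τ) + τ * (L * ‖Y j - y ((j : ℝ) * τ)‖) +
          ‖Y j - y ((j : ℝ) * τ)‖ + M / 2 * τ ^ 2 := by
        rw [hdecomp]
        refine le_trans (norm_sub_le _ _) ?_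
        have nB : ‖τ • (u - N (Y j))‖ ≤ τ * (Ms * τ) := by
          rw [norm_smul, Real.norm_eq_abs, abs_of_pos hτpos]
          exact mul_le_mul_of_nonneg_left hu1 hτpos.le
        have nC : ‖τ • (N (Y j) - N (y ((j : ℝ) * τ)))‖ ≤ τ * (L * ‖Y j - y ((j : ℝ) * τ)‖) := by
          rw [norm_smul, Real.norm_eq_abs, abs_of_pos hτpos]
          exact mul_le_mul_of_nonneg_left (hLip _ _) hτpos.le
        have n1 := norm_add_le ((Y (j + 1) - (Y j + τ • u)) + τ • (u - N (Y j)) +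
            τ • (N (Y j) - N (y ((j : ℝ) * τ)))) (Y j - y ((j : ℝ) * τ))
        have n2 := norm_add_le ((Y (j + 1) - (Y j + τ • u)) + τ • (u - N (Y j)))
            (τ • (N (Y j) - N (y ((j : ℝ) * τ))))
        have n3 := norm_add_le (Y (j + 1) - (Y j + τ • u)) (τ • (u - N (Y j)))
        linarith [htay]
      -- combine with the induction hypothesis
      set e : ℝ := ‖Y j - y ((j : ℝ) * τ)‖ with he
      have henn : 0 ≤ e := norm_nonneg _
      have hstepineq : ‖Y (j + 1) - y (((j : ℝ) + 1) * τ)‖ ≤ (1 + L * τ) * e + C * τ ^ 2 := by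
        refine le_trans hnorm (le_of_eq ?_)
        rw [hCdef]; ring
      have hpow1 : (1 : ℝ) ≤ (1 + L * τ) ^ j := one_le_pow₀ (by linarith [mul_pos hLpos hτpos])
      have hfac : (0 : ℝ) < 1 + L * τ := by linarith [mul_pos hLpos hτpos]
      have hchain : (1 + L * τ) * e + C * τ ^ 2 ≤
          (C / L) * ((1 + L * τ) ^ (j + 1) - 1) * τ := by
        have h1 : (1 + L * τ) * e ≤ (1 + L * τ) * ((C / L) * ((1 + L * τ) ^ j - 1) * τ) :=
          mul_le_mul_of_nonneg_left ihe hfac.le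
        have h2 : (1 + L * τ) * ((C / L) * ((1 + L * τ) ^ j - 1) * τ) + C * τ ^ 2 =
            (C / L) * ((1 + L * τ) ^ (j + 1) - 1) * τ := by
          field_simp
          ring
        linarith
      rw [hcast]
      exact le_trans hstepineq hchain
  -- compare the discrete bound with the exponential
  intro j hj
  refine le_trans (key j hj) ?_
  have hexp : (1 + L * τ) ^ j ≤ Real.exp (L * ((j : ℝ) * τ)) := by
    have h1 : 1 + L * τ ≤ Real.exp (L * τ) := by
      have := Real.add_one_le_exp (L * τ)
      linarith
    have h2 : (1 + L * τ) ^ j ≤ (Real.exp (L * τ)) ^ j :=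
      pow_le_pow_left₀ (by nlinarith [mul_pos hLpos hτpos]) h1 j
    calc (1 + L * τ) ^ j ≤ (Real.exp (L * τ)) ^ j := h2
      _ = Real.exp ((j : ℝ) * (L * τ)) := by rw [← Real.exp_nat_mul]
      _ = Real.exp (L * ((j : ℝ) * τ)) := by ring_nf
  have hCL : 0 ≤ C / L := div_nonneg hCnn hLpos.le
  have := mul_le_mul_of_nonneg_left (sub_le_sub_right hexp 1) hCL
  exact mul_le_mul_of_nonneg_right this hτpos.le
end

section
/- Let E be a finite-dimensional real normed vector space, N : E → E Lipschitz continuous with constant L > 0, and let z : [0, T] → E be twice continuously differentiable with −z'(t) = N(z(t)) for all t ∈ [0, T] and ‖z''(t)‖ ≤ M on [0, T]. Fix a positive integer N̄, set τ = T/N̄ and t_j = jτ, and let (Z_j)_{0 ≤ j ≤ N̄} be any sequence in E with Z_{N̄} = z(T) such that for each j ∈ {N̄−1, …, 0} there exists u_j ∈ E with ‖u_j − N(Z_{j+1})‖ ≤ M_s·τ and ‖Z_j − (Z_{j+1} + τ·u_j)‖ ≤ M_r·τ². Then for all 0 ≤ j ≤ N̄, ‖Z_j − z(t_j)‖ ≤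 ((M/2 + M_s + M_r)/L)·(e^{L·(T − t_j)} − 1)·τ; i.e. the rank-adaptive reverse-time Euler scheme converges with global order one. -/
open Set

/-- Backward Taylor estimate at the right endpoint. -/
lemma taylor_back_aux {E : Type*} [NormedAddCommGroup E] [NormedSpace ℝ E]
    (z z' z'' : ℝ → E) (a b M : ℝ) (hab : a ≤ b)
    (hz' : ∀ t ∈ Icc a b, HasDerivAt z (z' t) t)
    (hz'' : ∀ t ∈ Icc a b, HasDerivAt z' (z'' t) t)
    (hM : ∀ t ∈ Icc a b, ‖z'' t‖ ≤ M) :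
    ‖z a - z b + (b - a) • z' b‖ ≤ M / 2 * (b - a) ^ 2 := by
  -- mean value bound on z'
  have hmv : ∀ c ∈ Icc a b, ‖z' b - z' c‖ ≤ M * (b - c) := by
    intro c hc
    have := norm_image_sub_le_of_norm_deriv_le_segment'
      (f := z') (f' := z'') (a := c) (b := b)
      (fun x hx => (hz'' x ⟨le_trans hc.1 hx.1, hx.2⟩).hasDerivWithinAt)
      (fun x hx => hM x ⟨le_trans hc.1 hx.1, hx.2.le⟩) b (right_mem_Icc.2 hc.2)
    simpa using this
  -- reversed function
  set g : ℝ → E := fun s => z (a + b - s) - z b + (s - a) • z' b with hg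
  have hgd : ∀ s ∈ Icc a b, HasDerivAt g (z' b - z' (a + b - s)) s := by
    intro s hs
    have hmem : a + b - s ∈ Icc a b := ⟨by linarith [hs.2], by linarith [hs.1]⟩
    have h1 : HasDerivAt (fun s : ℝ => a + b - s) (-1) s := by
      simpa using (hasDerivAt_id' s).const_sub (a+b)
    have h2 : HasDerivAt (fun s : ℝ => z (a + b - s)) ((-1 : ℝ) • z' (a + b - s)) s :=
      (hz' _ hmem).scomp s h1
    have h3 : HasDerivAt (fun s : ℝ => (s - a) • z' b) ((1 : ℝ) • z' b) s := by
      have : HasDerivAt (fun s : ℝ => s - a) 1 s := by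
        simpa using (hasDerivAt_id' s).sub_const a
      exact this.smul_const (z' b)
    have := (h2.sub (hasDerivAt_const s (z b))).add h3
    convert this using 1
    · rfl
    simp [smul_sub]
    abel
  have hB : ∀ s : ℝ, HasDerivAt (fun s => M / 2 * (s - a) ^ 2) (M * (s - a)) s := by
    intro s
    have h1 : HasDerivAt (fun s : ℝ => s - a) 1 s := by
      simpa using (hasDerivAt_id' s).sub_const a
    have := ((h1.pow 2)).const_mul (M / 2)
    exact this.congr_deriv (by ring)
  have key : ∀ x ∈ Icc a b, ‖g x‖ ≤ M / 2 * (x - a) ^ 2 := by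
    intro x hx
    refine image_norm_le_of_norm_deriv_right_le_deriv_boundary
      (f := g) (f' := fun s => z' b - z' (a + b - s)) (a := a) (b := b)
      (fun s hs => ((hgd s hs).continuousAt).continuousWithinAt)
      (fun s hs => (hgd s (Ico_subset_Icc_self hs)).hasDerivWithinAt)
      ?_ hB ?_ hx
    · simp [hg]
    · intro s hs
      have hmem : a + b - s ∈ Icc a b := ⟨by linarith [hs.2.le], by linarith [hs.1]⟩
      have := hmv _ hmem
      calc ‖z' b - z' (a + b - s)‖ ≤ M * (b - (a + b - s)) := this
        _ = M * (s - a) := by ring_nf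
  have := key b (right_mem_Icc.2 hab)
  simpa [hg] using this

set_option maxHeartbeats 1000000 in
/-- Global order-one convergence of the rank-adaptive reverse-time Euler scheme
`Z_j = 𝔗_{r_{j+1}}(Z_{j+1} + τ 𝔗_{s_{j+1}}(N(Z_{j+1})))` for the terminal value
problem `−dZ/dt = N(Z)`, `Z(T) = Z_T`; the truncated quantities are abstracted as
arbitrary elements `u_j` and `Z_j` satisfying the truncation bounds. -/
theorem rank_adaptive_reverse_euler_global_convergence
    {E : Type*} [NormedAddCommGroup E] [NormedSpace ℝ E] [FiniteDimensional ℝ E]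
    (N : E → E) (L : ℝ) (hLpos : 0 < L)
    (hLip : ∀ a b : E, ‖N a - N b‖ ≤ L * ‖a - b‖)
    (z z' z'' : ℝ → E) (T M Ms Mr : ℝ) (hT : 0 < T)
    (hz' : ∀ t ∈ Set.Icc (0 : ℝ) T, HasDerivAt z (z' t) t)
    (hz'' : ∀ t ∈ Set.Icc (0 : ℝ) T, HasDerivAt z' (z'' t) t)
    (hz''cont : ContinuousOn z'' (Set.Icc (0 : ℝ) T))
    (hode : ∀ t ∈ Set.Icc (0 : ℝ) T, -(z' t) = N (z t))
    (hM : ∀ t ∈ Set.Icc (0 : ℝ) T, ‖z'' t‖ ≤ M)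
    (Nbar : ℕ) (hNbar : 0 < Nbar) (τ : ℝ) (hτ : τ = T / (Nbar : ℝ))
    (Z : ℕ → E) (hZT : Z Nbar = z T)
    (hstep : ∀ j < Nbar, ∃ u : E,
      ‖u - N (Z (j + 1))‖ ≤ Ms * τ ∧ ‖Z j - (Z (j + 1) + τ • u)‖ ≤ Mr * τ ^ 2) :
    ∀ j ≤ Nbar,
      ‖Z j - z ((j : ℝ) * τ)‖ ≤
        ((M / 2 + Ms + Mr) / L) * (Real.exp (L * (T - (j : ℝ) * τ)) - 1) * τ := by
  have hNpos : (0 : ℝ) < (Nbar : ℝ) := by exact_mod_cast hNbar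
  have hτpos : 0 < τ := by rw [hτ]; positivity
  have hNτ : (Nbar : ℝ) * τ = T := by
    rw [hτ]; field_simp
  have hMnn : 0 ≤ M := le_trans (norm_nonneg _) (hM 0 ⟨le_refl _, hT.le⟩)
  have hMsnn : 0 ≤ Ms := by
    obtain ⟨u, hu1, _⟩ := hstep 0 hNbar
    nlinarith [norm_nonneg (u - N (Z 1))]
  have hMrnn : 0 ≤ Mr := by
    obtain ⟨u, _, hu2⟩ := hstep 0 hNbar
    nlinarith [norm_nonneg (Z 0 - (Z 1 + τ • u)), pow_pos hτpos 2]
  set C : ℝ := M / 2 + Ms + Mr with hC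
  have hCnn : 0 ≤ C := by positivity
  -- times are within [0,T]
  have hmem : ∀ j : ℕ, j ≤ Nbar → (j : ℝ) * τ ∈ Set.Icc (0 : ℝ) T := by
    intro j hj
    constructor
    · positivity
    · rw [← hNτ]
      have : (j : ℝ) ≤ (Nbar : ℝ) := by exact_mod_cast hj
      nlinarith
  -- discrete bound by induction on the number of remaining steps
  have key : ∀ d : ℕ, ∀ j : ℕ, j + d = Nbar →
      ‖Z j - z ((j : ℝ) * τ)‖ ≤ (C / L) * ((1 + L * τ) ^ d - 1) * τ := by
    intro d
    induction d with
    | zero =>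
      intro j hj
      simp only [Nat.add_zero] at hj
      subst hj
      rw [hNτ, hZT]
      simp
    | succ d ih =>
      intro j hj
      have hj1 : (j + 1) + d = Nbar := by omega
      have hjlt : j < Nbar := by omega
      have hj1le : j + 1 ≤ Nbar := by omega
      obtain ⟨u, hu1, hu2⟩ := hstep j hjlt
      set t0 : ℝ := (j : ℝ) * τ with ht0
      set t1 : ℝ := ((j : ℝ) + 1) * τ with ht1
      have ht1cast : ((j + 1 : ℕ) : ℝ) * τ = t1 := by push_cast [ht1]; ring
      have ht0mem : t0 ∈ Set.Icc (0 : ℝ) T := hmem j hjlt.le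
      have ht1mem : t1 ∈ Set.Icc (0 : ℝ) T := by
        rw [← ht1cast]; exact hmem (j + 1) hj1le
      have hsub : Set.Icc t0 t1 ⊆ Set.Icc (0 : ℝ) T := by
        apply Set.Icc_subset_Icc ht0mem.1 ht1mem.2
      have ht01 : t0 ≤ t1 := by
        rw [ht0, ht1]; nlinarith
      -- Taylor remainder
      have htay : ‖z t0 - z t1 + (t1 - t0) • z' t1‖ ≤ M / 2 * (t1 - t0) ^ 2 :=
        taylor_back_aux z z' z'' t0 t1 M ht01
          (fun t ht => hz' t (hsub ht)) (fun t ht => hz'' t (hsub ht))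
          (fun t ht => hM t (hsub ht))
      have ht1t0 : t1 - t0 = τ := by rw [ht0, ht1]; ring
      rw [ht1t0] at htay
      -- ODE at t1
      have hodet1 : N (z t1) = -(z' t1) := (hode t1 ht1mem).symm
      -- error identity
      have hid : Z j - z t0 =
          (Z j - (Z (j + 1) + τ • u)) + τ • (u - N (Z (j + 1)))
          + τ • (N (Z (j + 1)) - N (z t1)) + (Z (j + 1) - z t1)
          - (z t0 - z t1 + τ • z' t1) := by
        rw [hodet1]
        simp only [smul_sub, smul_neg]
        abel
      have ih1 : ‖Z (j + 1) - z t1‖ ≤ (C / L) * ((1 + L * τ) ^ d - 1) * τ := by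
        rw [← ht1cast]; exact ih (j + 1) hj1
      have hlip1 : ‖N (Z (j + 1)) - N (z t1)‖ ≤ L * ‖Z (j + 1) - z t1‖ := hLip _ _
      have hnorm : ‖Z j - z t0‖ ≤
          Mr * τ ^ 2 + τ * (Ms * τ) + τ * (L * ‖Z (j + 1) - z t1‖)
          + ‖Z (j + 1) - z t1‖ + M / 2 * τ ^ 2 := by
        rw [hid]
        have h1 := norm_add_le (Z j - (Z (j + 1) + τ • u)) (τ • (u - N (Z (j + 1))))
        calc ‖_‖ ≤ ‖(Z j - (Z (j + 1) + τ • u)) + τ • (u - N (Z (j + 1)))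
              + τ • (N (Z (j + 1)) - N (z t1)) + (Z (j + 1) - z t1)‖
              + ‖z t0 - z t1 + τ • z' t1‖ := norm_sub_le _ _
          _ ≤ (‖(Z j - (Z (j + 1) + τ • u)) + τ • (u - N (Z (j + 1)))
              + τ • (N (Z (j + 1)) - N (z t1))‖ + ‖Z (j + 1) - z t1‖)
              + ‖z t0 - z t1 + τ • z' t1‖ :=
                add_le_add_left (norm_add_le _ _) _
          _ ≤ ((‖(Z j - (Z (j + 1) + τ • u)) + τ • (u - N (Z (j + 1)))‖
              + ‖τ • (N (Z (j + 1)) - N (z t1))‖) + ‖Z (j + 1) - z t1‖)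
              + ‖z t0 - z t1 + τ • z' t1‖ :=
                add_le_add_left (add_le_add_left (norm_add_le _ _) _) _
          _ ≤ (((‖Z j - (Z (j + 1) + τ • u)‖ + ‖τ • (u - N (Z (j + 1)))‖)
              + ‖τ • (N (Z (j + 1)) - N (z t1))‖) + ‖Z (j + 1) - z t1‖)
              + ‖z t0 - z t1 + τ • z' t1‖ :=
                add_le_add_left (add_le_add_left (add_le_add_left (norm_add_le _ _) _) _) _
          _ ≤ Mr * τ ^ 2 + τ * (Ms * τ) + τ * (L * ‖Z (j + 1) - z t1‖)
              + ‖Z (j + 1) - z t1‖ + M / 2 * τ ^ 2 := by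
                rw [norm_smul, norm_smul, Real.norm_eq_abs, abs_of_pos hτpos]
                gcongr
      have hstepineq : ‖Z j - z t0‖ ≤
          (1 + L * τ) * ‖Z (j + 1) - z t1‖ + C * τ ^ 2 := by
        rw [hC]; nlinarith [norm_nonneg (Z (j + 1) - z t1)]
      have hfac : (0 : ℝ) ≤ 1 + L * τ := by positivity
      calc ‖Z j - z ((j:ℝ) * τ)‖ = ‖Z j - z t0‖ := by rw [ht0]
        _ ≤ (1 + L * τ) * ‖Z (j + 1) - z t1‖ + C * τ ^ 2 := hstepineq
        _ ≤ (1 + L * τ) * ((C / L) * ((1 + L * τ) ^ d - 1) * τ) + C * τ ^ 2 := by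
            gcongr
        _ = (C / L) * ((1 + L * τ) ^ (d + 1) - 1) * τ := by
            field_simp
            ring
  -- pass to the exponential bound
  intro j hj
  obtain ⟨d, hd⟩ : ∃ d : ℕ, j + d = Nbar := ⟨Nbar - j, by omega⟩
  have h1 := key d j hd
  have hexp : (1 + L * τ) ^ d - 1 ≤ Real.exp (L * (T - (j : ℝ) * τ)) - 1 := by
    have h2 : (1 + L * τ) ^ d ≤ Real.exp (L * τ) ^ d := by
      apply pow_le_pow_left₀ (by positivity)
      linarith [Real.add_one_le_exp (L * τ)]
    have h3 : Real.exp (L * τ) ^ d = Real.exp (L * (T - (j : ℝ) * τ)) := by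
      rw [← Real.exp_nat_mul]
      congr 1
      have : (d : ℝ) = (Nbar : ℝ) - (j : ℝ) := by
        have : (j : ℝ) + (d : ℝ) = (Nbar : ℝ) := by exact_mod_cast hd
        linarith
      rw [this, ← hNτ]; ring
    linarith [h2.trans_eq h3]
  calc ‖Z j - z ((j:ℝ) * τ)‖ ≤ (C / L) * ((1 + L * τ) ^ d - 1) * τ := h1
    _ ≤ (C / L) * (Real.exp (L * (T - (j : ℝ) * τ)) - 1) * τ := by
        have hCL : 0 ≤ C / L := by positivity
        gcongr
    _ = ((M / 2 + Ms + Mr) / L) * (Real.exp (L * (T - (j : ℝ) * τ)) - 1) * τ := by rw [hC]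
end
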